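/- arXiv:2201.04234 — 3 statements merged into one kernel-verified Lean document; each statement's English description precedes it below -/
import Mathlib

section
/- In binary classification, if two target conditional label distributions p_t(y|x) and p_t'(y|x) (both consistent with the same target marginal p_t(x)) differ on a set of positive target probability, then there exists a classifier f whose target error under p_t(y|x) strictly exceeds its target error under p_t'(y|x). Hence target accuracy is not identified from p_s(x,y) and p_t(x) alone. -/
open MeasureTheory

/-- In binary classification, if two target conditional label distributions `q` and `q'`
(probabilities of label 1 given x, both relative to the same target marginal `μ`) differ on a
set of positive `μ`-probability, then there is a classifier `f` whose target error under `q`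
strictly exceeds its target error under `q'`. -/
theorem stmt_0 {X : Type*} [MeasurableSpace X] (μ : Measure X) [IsProbabilityMeasure μ]
    (q q' : X → ℝ) (hq : Measurable q) (hq' : Measurable q')
    (hq01 : ∀ x, q x ∈ Set.Icc (0:ℝ) 1) (hq'01 : ∀ x, q' x ∈ Set.Icc (0:ℝ) 1)
    (hdiff : 0 < μ {x | q x ≠ q' x}) :
    ∃ f : X → Bool, Measurable f ∧
      ∫ x, (if f x then 1 - q' x else q' x) ∂μ < ∫ x, (if f x then 1 - q x else q x) ∂μ := by
  set f : X → Bool := fun x => if q x < q' x then true else false with hfdef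
  have hs : MeasurableSet {x | q x < q' x} := measurableSet_lt hq hq'
  have hfm : Measurable f := Measurable.ite hs measurable_const measurable_const
  refine ⟨f, hfm, ?_⟩
  have key : ∀ x, (if f x then 1 - q x else q x) - (if f x then 1 - q' x else q' x)
      = |q x - q' x| := by
    intro x
    simp only [hfdef]
    by_cases h : q x < q' x
    · simp [h, abs_of_nonpos (by linarith : q x - q' x ≤ 0)]
      try ring
    · simp [h, abs_of_nonneg (by linarith [not_lt.mp h] : (0:ℝ) ≤ q x - q' x)]
  have hint : ∀ (g : X → ℝ), Measurable g → (∀ x, g x ∈ Set.Icc (0:ℝ) 1) →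
      Integrable (fun x => if f x then 1 - g x else g x) μ := by
    intro g hg hg01
    refine Integrable.mono' (integrable_const 1)
      (((measurable_const.sub hg).ite (hfm (measurableSet_singleton true)) hg).aestronglyMeasurable)
      (ae_of_all _ fun x => ?_)
    have h0 := (hg01 x).1
    have h1 := (hg01 x).2
    by_cases h : f x <;> simp [h, abs_le] <;> constructor <;> linarith
  have hIq := hint q hq hq01
  have hIq' := hint q' hq' hq'01
  rw [← sub_pos, ← integral_sub hIq hIq']
  have : ∫ x, ((if f x then 1 - q x else q x) - (if f x then 1 - q' x else q' x)) ∂μ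
      = ∫ x, |q x - q' x| ∂μ := integral_congr_ae (ae_of_all _ key)
  rw [this]
  have hIabs : Integrable (fun x => |q x - q' x|) μ := by
    refine Integrable.mono' (integrable_const 2) (hq.sub hq').abs.aestronglyMeasurable
      (ae_of_all _ fun x => ?_)
    have h0 := (hq01 x).1; have h1 := (hq01 x).2
    have h0' := (hq'01 x).1; have h1' := (hq'01 x).2
    rw [norm_abs_eq_norm, Real.norm_eq_abs, abs_le]
    constructor <;> linarith
  rw [integral_pos_iff_support_of_nonneg (fun x => abs_nonneg _) hIabs]
  have : Function.support (fun x => |q x - q' x|) = {x | q x ≠ q' x} := by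
    ext x
    simp [Function.support, sub_ne_zero]
  rw [this]
  exact hdiff
end

section
/- ATC threshold transfer in the toy model: fix a classifier with w_inv > 0, w_spr > 0, and suppose the threshold t obtained on source samples satisfies t < e^{w_inv γ + w_spr}/(1+e^{w_inv γ + w_spr}) (all consistent-set points score above t). Then for any target distribution that changes only the probability mass p'_spr of the consistent set X_C (keeping the conditional distributions of x given membership in X_M or X_C fixed), the ATC estimate P_t[s(f(x)) < t] differs from the true target error P_t[prediction ≠ y] by exactly (1 - p'_spr)·(q_thres - q_err), where q_thres = P[s(f(x)) < t | X_M] and q_err = P[error | X_M] are shift-invariant quantities; in particular if q_thres = q_err on the source within X_M, the ATC estimate equals the true target error for every such target. -/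
open MeasureTheory

/-- A point of the toy model: `(x_inv, x_spr, y)` with label `y : Bool` (`true` = label 1). -/
abbrev ToyPoint := ℝ × ℝ × Bool

/-- Logit of the linear classifier. -/
noncomputable def toyLogit (winv wspr : ℝ) (p : ToyPoint) : ℝ := winv * p.1 + wspr * p.2.1

/-- Maximum confidence score of the sigmoid linear classifier. -/
noncomputable def toyConf (winv wspr : ℝ) (p : ToyPoint) : ℝ :=
  max (Real.exp (toyLogit winv wspr p) / (1 + Real.exp (toyLogit winv wspr p)))
      (1 / (1 + Real.exp (toyLogit winv wspr p)))

/-- The classifier (predicting 1 iff `wᵀx > 0`) errs at `p`. -/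
def toyErr (winv wspr : ℝ) (p : ToyPoint) : Prop :=
  ¬ ((0 < toyLogit winv wspr p) ↔ p.2.2 = true)

/-- Membership in the consistent set `X_C` of the toy model. -/
def toyInC (γ c : ℝ) (p : ToyPoint) : Prop :=
  if p.2.2 then p.2.1 = 1 ∧ γ ≤ p.1 ∧ p.1 ≤ c
  else p.2.1 = -1 ∧ -c ≤ p.1 ∧ p.1 ≤ -γ

/-- Membership in the minority (spurious-mismatch) set `X_M` of the toy model. -/
def toyInM (γ c : ℝ) (p : ToyPoint) : Prop :=
  if p.2.2 then p.2.1 = -1 ∧ γ ≤ p.1 ∧ p.1 ≤ c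
  else p.2.1 = 1 ∧ -c ≤ p.1 ∧ p.1 ≤ -γ

lemma aux_noerr (winv wspr γ c t : ℝ)
    (hwinv : 0 < winv) (hwspr : 0 < wspr) (hγ : 0 < γ)
    (ht : t < Real.exp (winv * γ + wspr) / (1 + Real.exp (winv * γ + wspr)))
    (p : ToyPoint) (hp : toyInC γ c p) :
    ¬ toyErr winv wspr p ∧ ¬ (toyConf winv wspr p < t) := by
  set a := winv * γ + wspr with ha
  have ha0 : 0 < a := by positivity
  rcases p with ⟨xi, xs, y⟩
  cases y
  · -- y = false
    simp only [toyInC, Bool.false_eq_true, if_false] at hp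
    obtain ⟨hxs, _, hxi⟩ := hp
    subst hxs
    have hLeq : toyLogit winv wspr (xi, -1, false) = winv * xi - wspr := by
      simp [toyLogit]; ring
    have hL : toyLogit winv wspr (xi, -1, false) ≤ -a := by
      rw [hLeq]; nlinarith [mul_le_mul_of_nonneg_left hxi hwinv.le]
    set L := toyLogit winv wspr (xi, -1, false) with hLd
    have hLneg : L < 0 := by linarith
    constructor
    · intro h
      exact h ⟨fun h0 => absurd h0 (by linarith), fun hb => by simp at hb⟩
    · refine not_lt.2 (le_trans ht.le (le_max_of_le_right ?_))
      rw [div_le_div_iff₀ (by positivity) (by positivity)]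
      have h2 : Real.exp a * Real.exp L ≤ 1 := by
        rw [← Real.exp_add]
        calc Real.exp (a + L) ≤ Real.exp 0 := Real.exp_le_exp.2 (by linarith)
          _ = 1 := Real.exp_zero
      nlinarith [Real.exp_pos a, Real.exp_pos L]
  · -- y = true
    simp only [toyInC, if_true] at hp
    obtain ⟨hxs, hxi, _⟩ := hp
    subst hxs
    have hLeq : toyLogit winv wspr (xi, 1, true) = winv * xi + wspr := by
      simp [toyLogit]
    have hL : a ≤ toyLogit winv wspr (xi, 1, true) := by
      rw [hLeq]; nlinarith [mul_le_mul_of_nonneg_left hxi hwinv.le]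
    set L := toyLogit winv wspr (xi, 1, true) with hLd
    constructor
    · intro h
      exact h ⟨fun _ => rfl, fun _ => by linarith⟩
    · refine not_lt.2 (le_trans ht.le (le_max_of_le_left ?_))
      rw [div_le_div_iff₀ (by positivity) (by positivity)]
      have := Real.exp_le_exp.2 hL
      nlinarith [Real.exp_pos a, Real.exp_pos L]

/-- ATC threshold transfer in the toy model: fix a classifier with `w_inv, w_spr > 0` and a
threshold `t` below the consistent-set boundary confidence.  For any target distribution
`μ = p'·ν_C + (1-p')·ν_M` that changes only the mass `p'` of the consistent set (keeping the
conditionals `ν_M`, `ν_C`, supported on `X_M` resp. `X_C`, fixed), the ATC estimate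
`P_t[s(f(x)) < t]` differs from the true target error by exactly
`(1 - p')·(q_thres - q_err)` where `q_thres = ν_M{score < t}` and `q_err = ν_M{error}` are
shift-invariant; in particular if they agree, the ATC estimate equals the true target error for
every such target. -/
theorem stmt_11 (winv wspr γ c t : ℝ)
    (hwinv : 0 < winv) (hwspr : 0 < wspr) (hγ : 0 < γ) (hγc : γ < c)
    (ht : t < Real.exp (winv * γ + wspr) / (1 + Real.exp (winv * γ + wspr)))
    (νM νC : Measure ToyPoint) [IsProbabilityMeasure νM] [IsProbabilityMeasure νC]
    (hM : νM {p | ¬ toyInM γ c p} = 0) (hC : νC {p | ¬ toyInC γ c p} = 0)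
    (p' : ℝ) (hp'0 : 0 ≤ p') (hp'1 : p' ≤ 1) :
    ((ENNReal.ofReal p' • νC + ENNReal.ofReal (1 - p') • νM)
        {p | toyConf winv wspr p < t}).toReal
      - ((ENNReal.ofReal p' • νC + ENNReal.ofReal (1 - p') • νM)
        {p | toyErr winv wspr p}).toReal
      = (1 - p') * ((νM {p | toyConf winv wspr p < t}).toReal
          - (νM {p | toyErr winv wspr p}).toReal)
    ∧ ((νM {p | toyConf winv wspr p < t}).toReal = (νM {p | toyErr winv wspr p}).toReal →
        ((ENNReal.ofReal p' • νC + ENNReal.ofReal (1 - p') • νM)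
            {p | toyConf winv wspr p < t}).toReal
          = ((ENNReal.ofReal p' • νC + ENNReal.ofReal (1 - p') • νM)
            {p | toyErr winv wspr p}).toReal) := by
  have key := aux_noerr winv wspr γ c t hwinv hwspr hγ ht
  have hC1 : νC {p | toyConf winv wspr p < t} = 0 :=
    measure_mono_null (fun p hp hpc => (key p hpc).2 hp) hC
  have hC2 : νC {p | toyErr winv wspr p} = 0 :=
    measure_mono_null (fun p hp hpc => (key p hpc).1 hp) hC
  have hmix : ∀ S : Set ToyPoint, νC S = 0 →
      ((ENNReal.ofReal p' • νC + ENNReal.ofReal (1 - p') • νM) S).toReal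
        = (1 - p') * (νM S).toReal := by
    intro S hS
    have hfin := measure_ne_top νM S
    simp [Measure.add_apply, Measure.smul_apply, hS, smul_eq_mul,
      ENNReal.toReal_mul, ENNReal.toReal_ofReal (by linarith : (0:ℝ) ≤ 1 - p')]
  have e1 := hmix _ hC1
  have e2 := hmix _ hC2
  constructor
  · rw [e1, e2]; ring
  · intro h; rw [e1, e2, h]
end

section
/- Generalized label shift error identity: suppose h: X -> Z is a representation such that p_s(h(x)|y) = p_t(h(x)|y) and p_s(y) > 0 for all y in the target label support, and suppose the classifier f factors through h (f(x) depends on x only via h(x)). Then the target error of f equals E_{(x,y)~p_s}[ (p_t(y)/p_s(y)) · 1{f(x) ≠ y} ]. -/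
open MeasureTheory

/-- Generalized label shift error identity: if `h : X → Z` is a representation whose conditional
law given each label `y` is the same under source and target (`map h (κs y) = map h (κt y)`),
`p_s(y) > 0` on the target label support, and the classifier factors through `h` as `g ∘ h`,
then the target error equals the importance-weighted source error with weights
`p_t(y)/p_s(y)`. -/
theorem stmt_15 {X Z Y : Type*} [MeasurableSpace X] [MeasurableSpace Z] [MeasurableSpace Y]
    [Fintype Y] [DecidableEq Y] [MeasurableSingletonClass Y]
    (h : X → Z) (hh : Measurable h) (g : Z → Y) (hg : Measurable g)
    (κs κt : Y → Measure X)
    [∀ y, IsProbabilityMeasure (κs y)] [∀ y, IsProbabilityMeasure (κt y)]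
    (psY ptY : Y → ℝ) (hpsY : ∀ y, 0 ≤ psY y) (hptY : ∀ y, 0 ≤ ptY y)
    (hsupp : ∀ y, 0 < ptY y → 0 < psY y)
    (hGLS : ∀ y, Measure.map h (κs y) = Measure.map h (κt y))
    (f : X → Y) (hf : ∀ x, f x = g (h x)) :
    ∑ y, ptY y * ((κt y) {x | f x ≠ y}).toReal
      = ∑ y, psY y * ((ptY y / psY y) * ((κs y) {x | f x ≠ y}).toReal) := by
  refine Finset.sum_congr rfl fun y _ => ?_
  have hset : {x | f x ≠ y} = h ⁻¹' {z | g z ≠ y} := by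
    ext x; simp [hf]
  have hmeas : (κt y) {x | f x ≠ y} = (κs y) {x | f x ≠ y} := by
    have hm : MeasurableSet {z | g z ≠ y} :=
      (hg (measurableSet_singleton y)).compl
    rw [hset, ← Measure.map_apply hh hm, ← Measure.map_apply hh hm, hGLS]
  rw [hmeas]
  rcases eq_or_lt_of_le (hptY y) with h0 | hpos
  · simp [← h0]
  · have hs := hsupp y hpos
    field_simp
end
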